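/- Let J be a finite group and M a finitely generated J-module that is free as a ℤ-module with M^J = 0. If Y is a J-submodule of M such that J acts trivially on the quotient M/Y, then M/Y is isomorphic to a subgroup of the first group cohomology H¹(J,Y); in particular M/Y is finite. -/

import Mathlib

variable (J M Y : Type) [Group J] [AddCommGroup M] [DistribMulAction J M]
  [AddCommGroup Y] [DistribMulAction J Y]

/-- The subgroup `M^J` of `J`-invariants of `M`. -/
def invariants : AddSubgroup M where
  carrier := {m | ∀ σ : J, σ • m = m}
  add_mem' := by
    intro a b ha hb σ
    rw [smul_add, ha σ, hb σ]
  zero_mem' := fun σ => smul_zero σ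
  neg_mem' := by
    intro a ha σ
    rw [smul_neg, ha σ]

instance : SMulCommClass J ℤ Y :=
  ⟨fun g n m => ((DistribMulAction.toAddMonoidHom Y g).map_zsmul n m)⟩

/-- Let `J` be a finite group and `M` a finitely generated `J`-module which is free as a
`ℤ`-module with `M^J = 0`. If `Y` is a `J`-submodule of `M` (here: a `J`-module equipped
with an injective equivariant map `i : Y → M`) such that `J` acts trivially on the quotient
`M/Y`, then `M/Y` is isomorphic to a subgroup of `H¹(J, Y)`; in particular `M/Y` is finite. -/
theorem quotient_embeds_in_H1 [Finite J] [Module.Finite ℤ M] [Module.Free ℤ M]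
    (hMJ : invariants J M = ⊥)
    (i : Y →+ M) (hi : Function.Injective i)
    (hequiv : ∀ (σ : J) (y : Y), i (σ • y) = σ • i y)
    (htriv : ∀ (σ : J) (m : M), σ • m - m ∈ i.range) :
    (∃ f : (M ⧸ i.range) →+
        groupCohomology.H1 (Rep.of (Representation.ofDistribMulAction ℤ J Y)),
      Function.Injective f) ∧
    Finite (M ⧸ i.range) := by
  classical
  have := Fintype.ofFinite J
  set A := Rep.of (Representation.ofDistribMulAction ℤ J Y) with hA
  -- choose preimages
  choose g hg using fun (m : M) (σ : J) => AddMonoidHom.mem_range.1 (htriv σ m)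
  -- hg : ∀ m σ, i (g m σ) = σ • m - m
  have hρ : ∀ (σ : J) (y : Y), A.ρ σ y = σ • y := fun σ y => rfl
  have hmem : ∀ m : M, (fun σ => g m σ) ∈ groupCohomology.cocycles₁ A := by
    intro m
    rw [groupCohomology.mem_cocycles₁_iff]
    intro σ τ
    apply hi
    rw [hg, hρ]
    show (σ * τ) • m - m = i (σ • g m τ + g m σ)
    rw [map_add, hequiv, hg, hg, smul_sub, mul_smul]
    abel
  -- the map M →+ oneCocycles A
  have hisub : ∀ a b : Y, i (a - b) = i a - i b := fun a b => map_sub i a b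
  set F : M →+ groupCohomology.cocycles₁ A :=
    { toFun := fun m => ⟨fun σ => g m σ, hmem m⟩
      map_zero' := by
        ext σ
        show g 0 σ = 0
        apply hi
        rw [hg]
        simp
      map_add' := by
        intro a b
        ext σ
        show g (a + b) σ = g a σ + g b σ
        apply hi
        rw [hg, map_add, hg, hg, smul_add]
        abel } with hF
  set f0 : M →+ groupCohomology.H1 A :=
    (groupCohomology.H1π A).hom.toAddMonoidHom.comp F with hf0
  have hker : ∀ m : M, f0 m = 0 ↔ ⇑(F m) ∈ groupCohomology.coboundaries₁ A := by
    intro m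
    exact groupCohomology.H1π_eq_zero_iff _
  have hrange : ∀ y : Y, f0 (i y) = 0 := by
    intro y
    rw [hker]
    refine ⟨y, funext fun σ => ?_⟩
    show σ • y - y = g (i y) σ
    apply hi
    rw [hg, hisub, hequiv]
  refine ⟨⟨QuotientAddGroup.lift i.range f0
      (by rintro _ ⟨y, rfl⟩; exact hrange y), ?_⟩, ?_⟩
  · rw [injective_iff_map_eq_zero]
    intro q hq
    induction q using QuotientAddGroup.induction_on with
    | H m =>
      rw [QuotientAddGroup.lift_mk'] at hq
      rw [hker] at hq
      have hq' : ∃ y : Y, ∀ σ : J, σ • y - y = g m σ :=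
        let ⟨y, hy⟩ := hq; ⟨y, fun σ => congrFun hy σ⟩
      obtain ⟨y, hy⟩ := hq'
      have hmy : m - i y ∈ invariants J M := by
        intro σ
        have h2 : i (σ • y - y) = σ • m - m := by
          rw [hy σ]; exact hg m σ
        rw [hisub, hequiv] at h2
        rw [smul_sub, sub_eq_sub_iff_sub_eq_sub]
        exact h2.symm
      rw [hMJ, AddSubgroup.mem_bot, sub_eq_zero] at hmy
      rw [QuotientAddGroup.eq_zero_iff]
      exact ⟨y, hmy.symm⟩
  · -- finiteness
    have hfg : AddGroup.FG (M ⧸ i.range) := by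
      have : AddGroup.FG M := Module.Finite.iff_addGroup_fg.1 ‹_›
      exact AddGroup.fg_of_surjective (QuotientAddGroup.mk'_surjective i.range)
    apply AddCommGroup.finite_of_fg_torsion
    intro q
    induction q using QuotientAddGroup.induction_on with
    | H m =>
      rw [isOfFinAddOrder_iff_nsmul_eq_zero]
      refine ⟨Fintype.card J, Fintype.card_pos, ?_⟩
      have hsum : (∑ σ : J, σ • m) ∈ invariants J M := by
        intro τ
        rw [Finset.smul_sum]
        simp_rw [← mul_smul]
        exact Fintype.sum_equiv (Equiv.mulLeft τ) _ _ (fun σ => rfl)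
      rw [hMJ, AddSubgroup.mem_bot] at hsum
      have : ((∑ σ : J, σ • m : M) : M ⧸ i.range) = Fintype.card J • (m : M ⧸ i.range) := by
        rw [← QuotientAddGroup.mk'_apply, map_sum]
        have : ∀ σ : J, QuotientAddGroup.mk' i.range (σ • m) =
            QuotientAddGroup.mk' i.range m := by
          intro σ
          rw [QuotientAddGroup.mk'_eq_mk']
          exact ⟨-(σ • m - m), neg_mem (htriv σ m), by abel⟩
        simp_rw [this]
        rw [Finset.sum_const, Finset.card_univ, QuotientAddGroup.mk'_apply]
      rw [hsum] at this
      exact this.symm
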